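/- With P defined by the internal DLA recurrence, P is symmetric: P(n,k) = P(n, n-1-k) for all n ≥ 1 and 0 ≤ k ≤ n-1. -/
import Mathlib


theorem internalDLA_prob_symmetric (P : ℕ → ℕ → ℚ)
    (hP1 : P 1 0 = 1)
    (hPleft : ∀ n : ℕ, 2 ≤ n → P n 0 = P (n - 1) 0 / n)
    (hPright : ∀ n : ℕ, 2 ≤ n → P n (n - 1) = P (n - 1) (n - 2) / n)
    (hPmid : ∀ n k : ℕ, 2 ≤ n → 1 ≤ k → k ≤ n - 2 →
      P n k = ((n - k : ℚ) / n) * P (n - 1) (k - 1) + ((k + 1 : ℚ) / n) * P (n - 1) k) :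
    ∀ n k : ℕ, 1 ≤ n → k ≤ n - 1 → P n k = P n (n - 1 - k) := by
  intro n
  induction n with
  | zero => intro k h; omega
  | succ m ih =>
    intro k _ hk
    rcases Nat.eq_zero_or_pos m with hm | hm
    · subst hm
      have : k = 0 := by omega
      subst this
      rfl
    · have hk' : k ≤ m := by omega
      by_cases hk0 : k = 0
      · subst hk0
        have h1 := hPleft (m + 1) (by omega)
        have h2 := hPright (m + 1) (by omega)
        have h3 := ih 0 hm (by omega)
        simp only [Nat.add_sub_cancel] at h1 h2 ⊢
        rw [show m + 1 - 2 = m - 1 by omega] at h2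
        simp only [Nat.sub_zero] at h3 ⊢
        rw [h1, h2, h3]
      · by_cases hkm : k = m
        · subst hkm
          have h1 := hPleft (k + 1) (by omega)
          have h2 := hPright (k + 1) (by omega)
          have h3 := ih 0 hm (by omega)
          simp only [Nat.add_sub_cancel] at h1 h2 ⊢
          rw [show k + 1 - 2 = k - 1 by omega] at h2
          simp only [Nat.sub_zero] at h3
          rw [Nat.sub_self]
          rw [h1, h2, h3]
        · -- 1 ≤ k ≤ m - 1
          have hkb : 1 ≤ k := by omega
          have hkt : k ≤ m - 1 := by omega
          have h1 := hPmid (m + 1) k (by omega) hkb (by omega)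
          have h2 := hPmid (m + 1) (m - k) (by omega) (by omega) (by omega)
          simp only [Nat.add_sub_cancel] at h1 h2 ⊢
          have e1 : P m k = P m (m - 1 - k) := ih k hm hkt
          have e2 : P m (k - 1) = P m (m - k) := by
            have := ih (k - 1) hm (by omega)
            rwa [show m - 1 - (k - 1) = m - k by omega] at this
          rw [show m - k - 1 = m - 1 - k by omega] at h2
          rw [h1, h2, e1, e2]
          have c1 : ((m : ℚ) - k : ℚ) ≥ 0 := by
            have : (k : ℚ) ≤ m := by exact_mod_cast hk'
            linarith
          have hc : ((m - k : ℕ) : ℚ) = (m : ℚ) - k := by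
            push_cast [Nat.cast_sub hk']; ring
          push_cast [hc]
          ring
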